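/- Let K = [diag(g_1)V, diag(g_2)V, ..., diag(g_b)V] ∈ ℝ^{k×k} where k = bt, V ∈ ℝ^{k×t} and g_1,...,g_b ∈ ℝ^k. For each j, let Q_j ∈ ℝ^{k×t} be a matrix with orthonormal columns whose range is the orthogonal complement of the span of the columns of all blocks diag(g_i)V with i ≠ j. Then σ_min(K) ≥ (1/√b) · min_{1≤j≤b} σ_min(Q_j^T diag(g_j) V). -/

import Mathlib

open Matrix

/-- Euclidean norm of a vector. -/
noncomputable def enormEuc {n : Type*} [Fintype n] (x : n → ℝ) : ℝ :=
  Real.sqrt (∑ i, x i ^ 2)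

/-- Smallest singular value of a matrix, as the infimum of `‖Mx‖` over unit vectors. -/
noncomputable def sigMin {m n : Type*} [Fintype m] [Fintype n] (M : Matrix m n ℝ) : ℝ :=
  sInf {r | ∃ x : n → ℝ, enormEuc x = 1 ∧ r = enormEuc (M.mulVec x)}

lemma enorm_nonneg' {n : Type*} [Fintype n] (x : n → ℝ) : 0 ≤ enormEuc x :=
  Real.sqrt_nonneg _

lemma enorm_sq {n : Type*} [Fintype n] (x : n → ℝ) : enormEuc x ^ 2 = ∑ i, x i ^ 2 :=
  Real.sq_sqrt (Finset.sum_nonneg fun i _ => sq_nonneg _)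

lemma enorm_smul' {n : Type*} [Fintype n] (c : ℝ) (x : n → ℝ) :
    enormEuc (fun i => c * x i) = |c| * enormEuc x := by
  unfold enormEuc
  have h : ∑ i, (c * x i) ^ 2 = c ^ 2 * ∑ i, x i ^ 2 := by
    rw [Finset.mul_sum]; congr 1; ext i; ring
  rw [h, Real.sqrt_mul (sq_nonneg c), Real.sqrt_sq_eq_abs]

lemma sigMin_nonneg' {m n : Type*} [Fintype m] [Fintype n] (M : Matrix m n ℝ) :
    0 ≤ sigMin M :=
  Real.sInf_nonneg (by rintro r ⟨x, hx, rfl⟩; exact enorm_nonneg' _)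

lemma sigMin_le' {m n : Type*} [Fintype m] [Fintype n] (M : Matrix m n ℝ)
    (x : n → ℝ) (hx : enormEuc x = 1) : sigMin M ≤ enormEuc (M.mulVec x) :=
  csInf_le ⟨0, by rintro r ⟨y, hy, rfl⟩; exact enorm_nonneg' _⟩ ⟨x, hx, rfl⟩

lemma sigMin_mul_le {m n : Type*} [Fintype m] [Fintype n] (M : Matrix m n ℝ)
    (y : n → ℝ) : sigMin M * enormEuc y ≤ enormEuc (M.mulVec y) := by
  rcases eq_or_ne (enormEuc y) 0 with h0 | h0
  · rw [h0, mul_zero]; exact enorm_nonneg' _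
  · have hpos : 0 < enormEuc y := (enorm_nonneg' y).lt_of_ne (Ne.symm h0)
    set c := (enormEuc y)⁻¹ with hc
    have hcpos : 0 < c := inv_pos.mpr hpos
    have hu : enormEuc (fun i => c * y i) = 1 := by
      rw [enorm_smul', abs_of_pos hcpos, hc, inv_mul_cancel₀ h0]
    have h1 : sigMin M ≤ enormEuc (M.mulVec fun i => c * y i) := sigMin_le' M _ hu
    have h2 : M.mulVec (fun i => c * y i) = fun i => c * M.mulVec y i := by
      funext i
      show ∑ j, M i j * (c * y j) = c * ∑ j, M i j * y j
      rw [Finset.mul_sum]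
      congr 1; ext j; ring
    rw [h2, enorm_smul', abs_of_pos hcpos] at h1
    calc sigMin M * enormEuc y ≤ (c * enormEuc (M.mulVec y)) * enormEuc y :=
          mul_le_mul_of_nonneg_right h1 hpos.le
      _ = enormEuc (M.mulVec y) * (c * enormEuc y) := by ring
      _ = enormEuc (M.mulVec y) := by rw [hc, inv_mul_cancel₀ h0, mul_one]
  
lemma orth_contract {k t : Type*} [Fintype k] [Fintype t] [DecidableEq t]
    (Q : Matrix k t ℝ) (h : Qᵀ * Q = 1) (z : k → ℝ) :
    enormEuc (Qᵀ.mulVec z) ≤ enormEuc z := by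
  unfold enormEuc
  apply Real.sqrt_le_sqrt
  set w := Qᵀ.mulVec z with hw
  set u := Q.mulVec w with hu
  have h2 : z ⬝ᵥ u = w ⬝ᵥ w := by
    rw [hu, dotProduct_mulVec, ← mulVec_transpose, ← hw]
  have h3 : u ⬝ᵥ u = w ⬝ᵥ w := by
    rw [hu, dotProduct_mulVec, ← mulVec_transpose]
    have : Qᵀ *ᵥ (Q *ᵥ w) = w := by rw [mulVec_mulVec, h, one_mulVec]
    rw [this]
  have h4 : (0:ℝ) ≤ ∑ i, (z i - u i) ^ 2 := Finset.sum_nonneg fun i _ => sq_nonneg _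
  have hexp : ∑ i, (z i - u i) ^ 2
      = ∑ i, z i ^ 2 - 2 * (z ⬝ᵥ u) + u ⬝ᵥ u := by
    simp only [dotProduct, Finset.mul_sum, ← Finset.sum_add_distrib, ← Finset.sum_sub_distrib]
    congr 1; ext i; ring
  have hww : ∑ s, w s ^ 2 = w ⬝ᵥ w := by simp [dotProduct, sq]
  rw [hexp, h2, h3] at h4
  rw [hww]
  linarith

/-- Peng–Vempala reduction: breaking a block Krylov matrix into pieces,
`σ_min(K) ≥ (1/√b) · min_j σ_min(Q_jᵀ diag(g_j) V)`, where for each `j` the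
matrix `Q_j` has orthonormal columns spanning the orthogonal complement of the
columns of all blocks `diag(g_i) V`, `i ≠ j`. -/
theorem stmt3 (b t : ℕ) (hb : 0 < b) (V : Matrix (Fin (b * t)) (Fin t) ℝ)
    (g : Fin b → Fin (b * t) → ℝ)
    (Q : Fin b → Matrix (Fin (b * t)) (Fin t) ℝ)
    (hQorth : ∀ j, (Q j)ᵀ * Q j = 1)
    (hQperp : ∀ i j, i ≠ j → (Q j)ᵀ * (Matrix.diagonal (g i) * V) = 0)
    (hQspan : ∀ j (v : Fin (b * t) → ℝ),
      (∀ i, i ≠ j → ∀ s : Fin t, ∑ r, v r * (Matrix.diagonal (g i) * V) r s = 0) →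
      ∃ c : Fin t → ℝ, v = (Q j).mulVec c)
    (hne : (Finset.univ : Finset (Fin b)).Nonempty)
    (K : Matrix (Fin (b * t)) (Fin b × Fin t) ℝ)
    (hK : ∀ i p, K i p = g p.1 i * V i p.2) :
    (1 / Real.sqrt b) *
        Finset.univ.inf' hne (fun j => sigMin ((Q j)ᵀ * (Matrix.diagonal (g j) * V))) ≤
      sigMin K := by
  by_cases ht : t = 0
  · subst ht
    have hz : ∀ j, sigMin ((Q j)ᵀ * (Matrix.diagonal (g j) * V)) = 0 := by
      intro j
      unfold sigMin
      convert Real.sInf_empty using 2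
      rw [Set.eq_empty_iff_forall_notMem]
      rintro r ⟨x, hx, rfl⟩
      simp [enormEuc] at hx
    have hinf : Finset.univ.inf' hne
        (fun j => sigMin ((Q j)ᵀ * (Matrix.diagonal (g j) * V))) = 0 := by
      rw [show (fun j => sigMin ((Q j)ᵀ * (Matrix.diagonal (g j) * V))) = fun _ => (0:ℝ)
        from funext hz, Finset.inf'_const]
    rw [hinf, mul_zero]
    exact sigMin_nonneg' K
  · have htpos : 0 < t := Nat.pos_of_ne_zero ht
    have hbpos : (0:ℝ) < b := Nat.cast_pos.mpr hb
    have hsb : 0 < Real.sqrt b := Real.sqrt_pos.mpr hbpos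
    apply le_csInf
    · refine ⟨enormEuc (K.mulVec fun p =>
        if p = ((⟨0, hb⟩ : Fin b), (⟨0, htpos⟩ : Fin t)) then 1 else 0),
        (fun p => if p = ((⟨0, hb⟩ : Fin b), (⟨0, htpos⟩ : Fin t)) then 1 else 0), ?_, rfl⟩
      unfold enormEuc
      have hsum : (∑ p : Fin b × Fin t,
          (if p = ((⟨0, hb⟩ : Fin b), (⟨0, htpos⟩ : Fin t)) then (1:ℝ) else 0) ^ 2) = 1 := by
        simp
      rw [hsum, Real.sqrt_one]
    · rintro r ⟨x, hx, rfl⟩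
      have hsum : ∑ j : Fin b, ∑ s : Fin t, x (j, s) ^ 2 = 1 := by
        have h := enorm_sq x
        rw [hx, one_pow, Fintype.sum_prod_type] at h
        exact h.symm
      have hA : ∃ j : Fin b, 1 / (b:ℝ) ≤ ∑ s, x (j, s) ^ 2 := by
        by_contra hcon
        push_neg at hcon
        have : (1:ℝ) < 1 := by
          calc (1:ℝ) = ∑ j : Fin b, ∑ s : Fin t, x (j, s) ^ 2 := hsum.symm
            _ < ∑ _j : Fin b, 1 / (b:ℝ) :=
                Finset.sum_lt_sum_of_nonempty hne fun j _ => hcon j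
            _ = 1 := by
                rw [Finset.sum_const, Finset.card_univ, Fintype.card_fin, nsmul_eq_mul]
                field_simp
        exact lt_irrefl _ this
      obtain ⟨j, hj⟩ := hA
      set y : Fin t → ℝ := fun s => x (j, s) with hy_def
      have hy : 1 / Real.sqrt b ≤ enormEuc y := by
        have h1 : Real.sqrt (1 / (b:ℝ)) ≤ enormEuc y := Real.sqrt_le_sqrt hj
        rwa [one_div, Real.sqrt_inv, ← one_div] at h1
      have hKx : K.mulVec x = ∑ p : Fin b,
          (Matrix.diagonal (g p) * V).mulVec (fun s => x (p, s)) := by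
        funext i
        show ∑ q : Fin b × Fin t, K i q * x q = _
        rw [Fintype.sum_prod_type, Finset.sum_apply]
        refine Finset.sum_congr rfl fun p _ => ?_
        show ∑ s, K i (p, s) * x (p, s)
            = ∑ s, (Matrix.diagonal (g p) * V) i s * x (p, s)
        refine Finset.sum_congr rfl fun s _ => ?_
        rw [hK, Matrix.diagonal_mul]
      have hQKx : (Q j)ᵀ.mulVec (K.mulVec x)
          = ((Q j)ᵀ * (Matrix.diagonal (g j) * V)).mulVec y := by
        rw [hKx]
        have hsplit : (Q j)ᵀ.mulVec
            (∑ p : Fin b, (Matrix.diagonal (g p) * V).mulVec (fun s => x (p, s)))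
            = ∑ p : Fin b,
              ((Q j)ᵀ * (Matrix.diagonal (g p) * V)).mulVec (fun s => x (p, s)) := by
          rw [← Matrix.mulVecLin_apply, map_sum]
          simp only [Matrix.mulVecLin_apply, Matrix.mulVec_mulVec]
        rw [hsplit, Finset.sum_eq_single j]
        · intro p _ hpj
          rw [hQperp p j hpj, zero_mulVec]
        · intro h; exact absurd (Finset.mem_univ j) h
      have hc1 : sigMin ((Q j)ᵀ * (Matrix.diagonal (g j) * V)) * enormEuc y
          ≤ enormEuc (K.mulVec x) :=
        calc sigMin ((Q j)ᵀ * (Matrix.diagonal (g j) * V)) * enormEuc y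
            ≤ enormEuc (((Q j)ᵀ * (Matrix.diagonal (g j) * V)).mulVec y) :=
              sigMin_mul_le _ _
          _ = enormEuc ((Q j)ᵀ.mulVec (K.mulVec x)) := by rw [hQKx]
          _ ≤ enormEuc (K.mulVec x) := orth_contract (Q j) (hQorth j) _
      have hmj : Finset.univ.inf' hne
          (fun j => sigMin ((Q j)ᵀ * (Matrix.diagonal (g j) * V)))
          ≤ sigMin ((Q j)ᵀ * (Matrix.diagonal (g j) * V)) :=
        Finset.inf'_le _ (Finset.mem_univ j)
      have hσ : 0 ≤ sigMin ((Q j)ᵀ * (Matrix.diagonal (g j) * V)) := sigMin_nonneg' _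
      calc (1 / Real.sqrt b) * Finset.univ.inf' hne
            (fun j => sigMin ((Q j)ᵀ * (Matrix.diagonal (g j) * V)))
          ≤ (1 / Real.sqrt b) * sigMin ((Q j)ᵀ * (Matrix.diagonal (g j) * V)) :=
            mul_le_mul_of_nonneg_left hmj (by positivity)
        _ ≤ enormEuc y * sigMin ((Q j)ᵀ * (Matrix.diagonal (g j) * V)) :=
            mul_le_mul_of_nonneg_right hy hσ
        _ = sigMin ((Q j)ᵀ * (Matrix.diagonal (g j) * V)) * enormEuc y := mul_comm _ _
        _ ≤ enormEuc (K.mulVec x) := hc1
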